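/- Let a, b be integers with 0 < b < a and let β be the unique real root greater than 1 of the polynomial P(X) = X^3 − aX^2 − bX + 1. If either (a ≥ 2 and b = 1) or (a ≥ 4 and b = 2), then L_⊕(β) ≥ 2; more precisely, there exist x, y ∈ ℤ_β with x + y ∈ fin(β) but β·(x + y) ∉ ℤ_β. -/

import Mathlib

open Polynomial

/-- The β-transformation `T_β(x) = βx - ⌊βx⌋`. -/
noncomputable def betaT (β : ℝ) : ℝ → ℝ := fun x => β * x - ⌊β * x⌋

/-- `fin(β)`: reals `x` such that `|x|/β^N ∈ [0,1)` and the greedy expansion of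
`|x|/β^N` is finite, for some `N, n ∈ ℕ`. -/
def finBeta (β : ℝ) : Set ℝ :=
  {x | ∃ N n : ℕ, |x| / β ^ N ∈ Set.Ico (0 : ℝ) 1 ∧ (betaT β)^[n] (|x| / β ^ N) = 0}

/-- `ℤ_β`: the set of β-integers. -/
def betaInt (β : ℝ) : Set ℝ :=
  {x | ∃ N : ℕ, |x| / β ^ N ∈ Set.Ico (0 : ℝ) 1 ∧ (betaT β)^[N] (|x| / β ^ N) = 0}

/-- `L_⊕(β)`: the least `L ∈ ℕ` such that `β^L·(x+y) ∈ ℤ_β` for all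
`x, y ∈ ℤ_β` with `x + y ∈ fin(β)`. -/
noncomputable def Lplus (β : ℝ) : ℕ :=
  sInf {L : ℕ | ∀ x ∈ betaInt β, ∀ y ∈ betaInt β,
    x + y ∈ finBeta β → β ^ L * (x + y) ∈ betaInt β}

/-- `L_⊗(β)`: the least `L ∈ ℕ` such that `β^L·(x·y) ∈ ℤ_β` for all
`x, y ∈ ℤ_β` with `x·y ∈ fin(β)`. -/
noncomputable def Lmul (β : ℝ) : ℕ :=
  sInf {L : ℕ | ∀ x ∈ betaInt β, ∀ y ∈ betaInt β,
    x * y ∈ finBeta β → β ^ L * (x * y) ∈ betaInt β}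


private lemma betaT_mem (β x : ℝ) : 0 ≤ betaT β x ∧ betaT β x < 1 := by
  have h : betaT β x = Int.fract (β * x) := rfl
  rw [h]
  exact ⟨Int.fract_nonneg _, Int.fract_lt_one _⟩

private lemma iter_mem (β : ℝ) {w : ℝ} (h0 : 0 ≤ w) (h1 : w < 1) (i : ℕ) :
    0 ≤ (betaT β)^[i] w ∧ (betaT β)^[i] w < 1 := by
  cases i with
  | zero => exact ⟨h0, h1⟩
  | succ n => rw [Function.iterate_succ_apply']; exact betaT_mem β _

private lemma betaT_eq (β x : ℝ) (k : ℤ) (h1 : (k : ℝ) ≤ β * x) (h2 : β * x < k + 1) :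
    betaT β x = β * x - k := by
  unfold betaT
  rw [show ⌊β * x⌋ = k from Int.floor_eq_iff.2 ⟨h1, h2⟩]

private lemma betaT_zero (β : ℝ) : betaT β 0 = 0 := by simp [betaT]

private lemma iter_zero (β : ℝ) (n : ℕ) : (betaT β)^[n] 0 = 0 :=
  Function.iterate_fixed (betaT_zero β) n

private lemma betaT_intdiv (β : ℝ) (hβ : 0 < β) (q : ℤ) : betaT β ((q : ℝ) / β) = 0 := by
  have h : β * ((q : ℝ) / β) = (q : ℝ) := by field_simp
  unfold betaT
  rw [h, Int.floor_intCast]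
  ring

private lemma iter_scale (β : ℝ) (hβ : 1 < β) {v : ℝ} (h0 : 0 ≤ v) (h1 : v < 1) (k : ℕ) :
    (betaT β)^[k] (v / β ^ k) = v := by
  have hβ0 : (0 : ℝ) < β := by linarith
  induction k with
  | zero => simp
  | succ k ih =>
    have hpow : (0 : ℝ) < β ^ k := pow_pos hβ0 k
    have hstep : betaT β (v / β ^ (k + 1)) = v / β ^ k := by
      have hmul : β * (v / β ^ (k + 1)) = v / β ^ k := by
        rw [pow_succ]
        field_simp
      have hlt : v / β ^ k < 1 := by
        rw [div_lt_one hpow]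
        calc v < 1 := h1
          _ ≤ β ^ k := one_le_pow₀ hβ.le
      have hge : (0:ℝ) ≤ v / β ^ k := by positivity
      have := betaT_eq β (v / β ^ (k+1)) 0 (by rw [hmul]; exact_mod_cast hge)
        (by rw [hmul]; push_cast; linarith)
      rw [this, hmul]
      push_cast
      ring
    rw [Function.iterate_succ_apply, hstep, ih]

private lemma expand_aux (β w : ℝ) (n : ℕ) :
    β ^ n * w =
      (∑ i ∈ Finset.range n, (⌊β * (betaT β)^[i] w⌋ : ℝ) * β ^ (n - 1 - i))
        + (betaT β)^[n] w := by
  induction n with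
  | zero => simp
  | succ n ih =>
    have hsucc : (betaT β)^[n + 1] w
        = β * (betaT β)^[n] w - ⌊β * (betaT β)^[n] w⌋ := by
      rw [Function.iterate_succ_apply']; rfl
    rw [Finset.sum_range_succ]
    have h1 : ∑ i ∈ Finset.range n, (⌊β * (betaT β)^[i] w⌋ : ℝ) * β ^ (n + 1 - 1 - i)
        = β * ∑ i ∈ Finset.range n, (⌊β * (betaT β)^[i] w⌋ : ℝ) * β ^ (n - 1 - i) := by
      rw [Finset.mul_sum]
      refine Finset.sum_congr rfl fun i hi => ?_
      have hi' := Finset.mem_range.1 hi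
      rw [show n + 1 - 1 - i = (n - 1 - i) + 1 by omega, pow_succ]
      ring
    have h2 : β ^ (n + 1) * w = β * (β ^ n * w) := by ring
    rw [h2, ih, mul_add, ← h1, hsucc]
    rw [show n + 1 - 1 - n = 0 by omega, pow_zero]
    ring

private lemma geom_bound {γ : ℝ} (h0 : 0 ≤ γ) (h1 : γ < 1) (M : ℕ) :
    ∑ i ∈ Finset.range M, γ ^ i ≤ (1 - γ)⁻¹ := by
  have hpos : 0 < 1 - γ := by linarith
  rw [inv_eq_one_div, le_div_iff₀ hpos]
  have h := geom_sum_mul γ M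
  have h2 : (∑ i ∈ Finset.range M, γ ^ i) * (1 - γ) = 1 - γ ^ M := by linear_combination -h
  rw [h2]
  have := pow_nonneg h0 M
  linarith

private lemma beta_bounds (a b : ℤ) (hb : 0 < b) (hba : b < a) (β : ℝ) (hβ : 1 < β)
    (hroot : β ^ 3 - (a : ℝ) * β ^ 2 - (b : ℝ) * β + 1 = 0) :
    (a : ℝ) < β ∧ β < (a : ℝ) + 1 := by
  have h1 : β ^ 2 * (β - a) = (b : ℝ) * β - 1 := by linear_combination hroot
  have hbR : (1 : ℝ) ≤ (b : ℝ) := by exact_mod_cast hb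
  have hbaR : (b : ℝ) ≤ (a : ℝ) - 1 := by
    have : b ≤ a - 1 := by omega
    exact_mod_cast this
  have h2 : (0 : ℝ) < (b : ℝ) * β - 1 := by nlinarith
  constructor
  · by_contra h
    push_neg at h
    have h3 : β ^ 2 * (β - (a : ℝ)) ≤ 0 :=
      mul_nonpos_of_nonneg_of_nonpos (by positivity) (by linarith)
    linarith
  · by_contra h
    push_neg at h
    have h4 : (1 : ℝ) ≤ β - (a : ℝ) := by linarith
    have h5 : β ^ 2 ≤ β ^ 2 * (β - (a : ℝ)) := by nlinarith
    nlinarith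

private lemma gamma_exists (a b : ℤ) (ha : 2 ≤ a) (hb : 1 ≤ b) :
    ∃ γ : ℝ, 0 < γ ∧ γ < 1 ∧ γ ^ 3 - (a : ℝ) * γ ^ 2 - (b : ℝ) * γ + 1 = 0 := by
  set f : ℝ → ℝ := fun x => x ^ 3 - (a : ℝ) * x ^ 2 - (b : ℝ) * x + 1 with hf
  have hc : ContinuousOn f (Set.Icc (0 : ℝ) 1) := by
    apply Continuous.continuousOn
    fun_prop
  have h0 : f 0 = 1 := by simp [hf]
  have habR : (3 : ℝ) ≤ (a : ℝ) + (b : ℝ) := by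
    have : (3 : ℤ) ≤ a + b := by omega
    exact_mod_cast this
  have h1 : f 1 ≤ -1 := by
    simp only [hf, one_pow, mul_one]
    linarith
  have hsub := intermediate_value_Ioo' (by norm_num : (0 : ℝ) ≤ 1) hc
  have hmem : (0 : ℝ) ∈ Set.Ioo (f 1) (f 0) := by
    rw [h0]; exact ⟨by linarith, by norm_num⟩
  obtain ⟨γ, hγmem, hγeq⟩ := hsub hmem
  exact ⟨γ, hγmem.1, hγmem.2, hγeq⟩

private lemma conj_root (a b : ℤ) (hb : 0 < b) (hba : b < a) (ha : 2 ≤ a)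
    {β γ : ℝ}
    (hroot : β ^ 3 - (a : ℝ) * β ^ 2 - (b : ℝ) * β + 1 = 0)
    (hγ : γ ^ 3 - (a : ℝ) * γ ^ 2 - (b : ℝ) * γ + 1 = 0)
    (Q : Polynomial ℤ) (hQ : aeval β Q = 0) : aeval γ Q = 0 := by
  set Pq : Polynomial ℚ := X ^ 3 - C (a : ℚ) * X ^ 2 - C (b : ℚ) * X + 1 with hPq
  have hmonic : Pq.Monic := by
    unfold Pq
    monicity!
  have hdeg : Pq.natDegree = 3 := by
    unfold Pq
    compute_degree!
  have hβroot : aeval β Pq = 0 := by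
    simp only [hPq, map_sub, map_add, map_mul, map_pow, map_one, aeval_X, aeval_C, eq_ratCast, algebraMap_int_eq, eq_intCast]
    push_cast
    linear_combination hroot
  have hγroot : aeval γ Pq = 0 := by
    simp only [hPq, map_sub, map_add, map_mul, map_pow, map_one, aeval_X, aeval_C, eq_ratCast, algebraMap_int_eq, eq_intCast]
    push_cast
    linear_combination hγ
  have hirr : Irreducible Pq := by
    rw [hmonic.irreducible_iff_roots_eq_zero_of_degree_le_three (by omega) (by omega)]
    by_contra hne
    obtain ⟨r, hr⟩ := Multiset.exists_mem_of_ne_zero hne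
    have hroot_r : r ^ 3 - (a : ℚ) * r ^ 2 - (b : ℚ) * r + 1 = 0 := by
      have h2 : eval r Pq = 0 := (mem_roots hmonic.ne_zero).1 hr
      simp only [hPq, eval_sub, eval_add, eval_mul, eval_pow, eval_one, eval_X, eval_C] at h2
      linarith
    -- r is integral over ℤ hence an integer
    set Pz : Polynomial ℤ := X ^ 3 - C a * X ^ 2 - C b * X + 1 with hPz
    have hPzmonic : Pz.Monic := by unfold Pz; monicity!
    have hPzroot : aeval r Pz = 0 := by
      simp only [hPz, map_sub, map_add, map_mul, map_pow, map_one, aeval_X, aeval_C,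
        map_intCast, algebraMap_int_eq, eq_intCast]
      push_cast
      linear_combination hroot_r
    have hint : IsIntegral ℤ r := ⟨Pz, hPzmonic, hPzroot⟩
    obtain ⟨m, hm⟩ := IsIntegrallyClosed.isIntegral_iff.1 hint
    have hmQ : (m : ℚ) = r := by exact_mod_cast hm
    rw [← hmQ] at hroot_r
    have hZ : m ^ 3 - a * m ^ 2 - b * m + 1 = 0 := by exact_mod_cast hroot_r
    have hdvd : m ∣ 1 := ⟨-(m ^ 2 - a * m - b), by linear_combination hZ⟩
    have hm1 : m = 1 ∨ m = -1 := Int.isUnit_iff.1 (isUnit_of_dvd_one hdvd)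
    rcases hm1 with rfl | rfl
    · omega
    · omega
  have hmin : minpoly ℚ β = Pq := (minpoly.eq_of_irreducible_of_monic hirr hβroot hmonic).symm
  have hQq : aeval β (Q.map (algebraMap ℤ ℚ)) = 0 := by rwa [aeval_map_algebraMap]
  have hdvd : Pq ∣ Q.map (algebraMap ℤ ℚ) := hmin ▸ minpoly.dvd ℚ β hQq
  obtain ⟨H, hH⟩ := hdvd
  have hγQ : aeval γ (Q.map (algebraMap ℤ ℚ)) = 0 := by
    rw [hH, map_mul, hγroot, zero_mul]
  rwa [aeval_map_algebraMap] at hγQ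

private lemma digit_bounds {a : ℤ} {β : ℝ} (hβ1 : 1 < β) (hβa : β < (a : ℝ) + 1)
    {w : ℝ} (h0 : 0 ≤ w) (h1 : w < 1) (i : ℕ) :
    0 ≤ ⌊β * (betaT β)^[i] w⌋ ∧ ⌊β * (betaT β)^[i] w⌋ ≤ a := by
  obtain ⟨ht0, ht1⟩ := iter_mem β h0 h1 i
  have hβ0 : (0 : ℝ) < β := by linarith
  constructor
  · exact Int.floor_nonneg.2 (mul_nonneg hβ0.le ht0)
  · have hlt : β * (betaT β)^[i] w < (a : ℝ) + 1 := by
      calc β * (betaT β)^[i] w ≤ β * 1 * 1 := by nlinarith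
        _ < (a : ℝ) + 1 := by linarith
    have := Int.floor_lt.2 (by push_cast; linarith : β * (betaT β)^[i] w < ((a + 1 : ℤ) : ℝ))
    omega

private lemma exists_L (a b : ℤ) (hb : 0 < b) (hba : b < a) (ha : 2 ≤ a)
    (β : ℝ) (hβ : 1 < β)
    (hroot : β ^ 3 - (a : ℝ) * β ^ 2 - (b : ℝ) * β + 1 = 0) :
    ∃ L : ℕ, ∀ x ∈ betaInt β, ∀ y ∈ betaInt β,
      x + y ∈ finBeta β → β ^ L * (x + y) ∈ betaInt β := by
  classical
  obtain ⟨hβa, hβa1⟩ := beta_bounds a b hb hba β hβ hroot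
  obtain ⟨γ, hγ0, hγ1, hγroot⟩ := gamma_exists a b ha (by omega)
  have haR : (2 : ℝ) ≤ (a : ℝ) := by exact_mod_cast ha
  have hεpos : (0 : ℝ) < (1 - γ) / (2 * (a : ℝ)) := by
    apply div_pos (by linarith) (by linarith)
  obtain ⟨L, hLlt⟩ := exists_pow_lt_of_lt_one hεpos hγ1
  refine ⟨L, ?_⟩
  rintro x ⟨Nx, hIcox, hTx⟩ y ⟨Ny, hIcoy, hTy⟩ ⟨N, n₀, hIcoz, hT0⟩
  obtain ⟨hwx0, hwx1⟩ := hIcox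
  obtain ⟨hwy0, hwy1⟩ := hIcoy
  obtain ⟨hw0, hw1⟩ := hIcoz
  have hβ0 : (0 : ℝ) < β := by linarith
  by_cases hz0 : x + y = 0
  · rw [hz0, mul_zero]
    exact ⟨0, by norm_num, by norm_num⟩
  have hzabs : 0 < |x + y| := abs_pos.2 hz0
  set w : ℝ := |x + y| / β ^ N with hwdef
  have hwpos : 0 < w := by positivity
  have hex : ∃ m, (betaT β)^[m] w = 0 := ⟨n₀, hT0⟩
  set n := Nat.find hex with hndef
  have hTn : (betaT β)^[n] w = 0 := Nat.find_spec hex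
  have hscale : ∀ M : ℕ, N ≤ M → |β ^ (M - N) * (x + y)| / β ^ M = w := by
    intro M hM
    rw [abs_mul, abs_of_pos (pow_pos hβ0 _), hwdef]
    rw [show M = (M - N) + N by omega, pow_add]
    field_simp
    rw [Nat.add_sub_cancel]
  by_cases hcase : n ≤ N + L
  · refine ⟨N + L, ?_, ?_⟩
    · rw [show β ^ L * (x + y) = β ^ ((N + L) - N) * (x + y) by rw [show (N+L) - N = L by omega],
        hscale (N + L) (by omega)]
      exact ⟨hwpos.le, hw1⟩
    · rw [show β ^ L * (x + y) = β ^ ((N + L) - N) * (x + y) by rw [show (N+L) - N = L by omega],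
        hscale (N + L) (by omega)]
      rw [show N + L = (N + L - n) + n by omega, Function.iterate_add_apply, hTn, iter_zero]
  · exfalso
    push_neg at hcase
    have hn1 : 1 ≤ n := by
      rcases Nat.eq_zero_or_pos n with h | h
      · exfalso
        have := hTn
        rw [h] at this
        simp at this
        exact absurd this (ne_of_gt hwpos)
      · exact h
    -- digits of z
    set c : ℕ → ℤ := fun i => ⌊β * (betaT β)^[i] w⌋ with hcdef
    have hzrep : β ^ n * w = ∑ i ∈ Finset.range n, (c i : ℝ) * β ^ (n - 1 - i) := by
      have h := expand_aux β w n
      rw [hTn, add_zero] at h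
      exact h
    have hcb : ∀ i, 0 ≤ c i ∧ c i ≤ a := fun i => digit_bounds hβ hβa1 hwpos.le hw1 i
    have hclast : 1 ≤ c (n - 1) := by
      have hlt : n - 1 < n := by omega
      have hprev : (betaT β)^[n - 1] w ≠ 0 := Nat.find_min hex (by rw [← hndef]; exact hlt)
      obtain ⟨ht0, _⟩ := iter_mem β hwpos.le hw1 (n - 1)
      have htpos : 0 < (betaT β)^[n - 1] w := lt_of_le_of_ne ht0 (Ne.symm hprev)
      have heq : betaT β ((betaT β)^[n - 1] w) = 0 := by
        have h := hTn
        rw [show n = (n - 1) + 1 by omega, Function.iterate_succ_apply'] at h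
        exact h
      have hceq : (c (n - 1) : ℝ) = β * (betaT β)^[n - 1] w := by
        have h2 : β * (betaT β)^[n-1] w - (⌊β * (betaT β)^[n-1] w⌋ : ℝ) = 0 := heq
        rw [hcdef]
        push_cast
        linarith
      have h3 : (0 : ℝ) < (c (n - 1) : ℝ) := by rw [hceq]; positivity
      have h4 : (0 : ℤ) < c (n - 1) := by exact_mod_cast h3
      omega
    -- digits of x and y
    set dx : ℕ → ℤ := fun i => ⌊β * (betaT β)^[i] (|x| / β ^ Nx)⌋ with hdxdef
    set dy : ℕ → ℤ := fun i => ⌊β * (betaT β)^[i] (|y| / β ^ Ny)⌋ with hdydef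
    have hxrep : |x| = ∑ i ∈ Finset.range Nx, (dx i : ℝ) * β ^ (Nx - 1 - i) := by
      have h := expand_aux β (|x| / β ^ Nx) Nx
      rw [hTx, add_zero] at h
      have h2 : β ^ Nx * (|x| / β ^ Nx) = |x| := by field_simp
      rw [h2] at h
      exact h
    have hyrep : |y| = ∑ i ∈ Finset.range Ny, (dy i : ℝ) * β ^ (Ny - 1 - i) := by
      have h := expand_aux β (|y| / β ^ Ny) Ny
      rw [hTy, add_zero] at h
      have h2 : β ^ Ny * (|y| / β ^ Ny) = |y| := by field_simp
      rw [h2] at h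
      exact h
    have hdxb : ∀ i, 0 ≤ dx i ∧ dx i ≤ a := fun i => digit_bounds hβ hβa1 hwx0 hwx1 i
    have hdyb : ∀ i, 0 ≤ dy i ∧ dy i ≤ a := fun i => digit_bounds hβ hβa1 hwy0 hwy1 i
    -- signs
    obtain ⟨ez, hez, hezeq⟩ : ∃ e : ℤ, (e = 1 ∨ e = -1) ∧ |x + y| = (e : ℝ) * (x + y) := by
      rcases abs_choice (x + y) with h | h
      · exact ⟨1, Or.inl rfl, by rw [h]; push_cast; ring⟩
      · exact ⟨-1, Or.inr rfl, by rw [h]; push_cast; ring⟩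
    obtain ⟨ex, hexx, hexeq⟩ : ∃ e : ℤ, (e = 1 ∨ e = -1) ∧ (e : ℝ) * |x| = x := by
      rcases abs_choice x with h | h
      · exact ⟨1, Or.inl rfl, by rw [h]; push_cast; ring⟩
      · exact ⟨-1, Or.inr rfl, by rw [h]; push_cast; ring⟩
    obtain ⟨ey, heyy, heyeq⟩ : ∃ e : ℤ, (e = 1 ∨ e = -1) ∧ (e : ℝ) * |y| = y := by
      rcases abs_choice y with h | h
      · exact ⟨1, Or.inl rfl, by rw [h]; push_cast; ring⟩
      · exact ⟨-1, Or.inr rfl, by rw [h]; push_cast; ring⟩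
    -- the polynomial
    set Q : Polynomial ℤ := (∑ i ∈ Finset.range n, C (c i) * X ^ (n - 1 - i))
      - C (ez * ex) * (∑ i ∈ Finset.range Nx, C (dx i) * X ^ ((n - N) + (Nx - 1 - i)))
      - C (ez * ey) * (∑ i ∈ Finset.range Ny, C (dy i) * X ^ ((n - N) + (Ny - 1 - i)))
      with hQdef
    have haev : ∀ t : ℝ, aeval t Q =
        (∑ i ∈ Finset.range n, (c i : ℝ) * t ^ (n - 1 - i))
        - (ez * ex : ℤ) * (∑ i ∈ Finset.range Nx, (dx i : ℝ) * t ^ ((n - N) + (Nx - 1 - i)))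
        - (ez * ey : ℤ) * (∑ i ∈ Finset.range Ny, (dy i : ℝ) * t ^ ((n - N) + (Ny - 1 - i))) := by
      intro t
      simp only [hQdef, map_sub, map_mul, map_sum, map_pow, aeval_X, aeval_C,
        map_intCast, algebraMap_int_eq, eq_intCast]
      push_cast
      ring
    have hsumx : ∀ t : ℝ, ∑ i ∈ Finset.range Nx, (dx i : ℝ) * t ^ ((n - N) + (Nx - 1 - i))
        = t ^ (n - N) * ∑ i ∈ Finset.range Nx, (dx i : ℝ) * t ^ (Nx - 1 - i) := by
      intro t
      rw [Finset.mul_sum]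
      exact Finset.sum_congr rfl fun i _ => by rw [pow_add]; ring
    have hsumy : ∀ t : ℝ, ∑ i ∈ Finset.range Ny, (dy i : ℝ) * t ^ ((n - N) + (Ny - 1 - i))
        = t ^ (n - N) * ∑ i ∈ Finset.range Ny, (dy i : ℝ) * t ^ (Ny - 1 - i) := by
      intro t
      rw [Finset.mul_sum]
      exact Finset.sum_congr rfl fun i _ => by rw [pow_add]; ring
    have hQβ : aeval β Q = 0 := by
      rw [haev, hsumx, hsumy, ← hxrep, ← hyrep]
      have hzsum : ∑ i ∈ Finset.range n, (c i : ℝ) * β ^ (n - 1 - i)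
          = β ^ (n - N) * |x + y| := by
        rw [← hzrep, hwdef, show n = (n - N) + N by omega, pow_add]
        field_simp
        rw [Nat.add_sub_cancel]
      rw [hzsum, hezeq]
      push_cast
      linear_combination (-(β^(n-N))*(ez:ℝ)) * hexeq + (-(β^(n-N))*(ez:ℝ)) * heyeq
    have hQγ := conj_root a b hb hba ha hroot hγroot Q hQβ
    rw [haev, hsumx, hsumy] at hQγ
    -- lower bound on the z-digit sum at γ
    have hsum_z : (1 : ℝ) ≤ ∑ i ∈ Finset.range n, (c i : ℝ) * γ ^ (n - 1 - i) := by
      have hterm : (1 : ℝ) ≤ (c (n - 1) : ℝ) * γ ^ (n - 1 - (n - 1)) := by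
        rw [Nat.sub_self, pow_zero, mul_one]
        exact_mod_cast hclast
      calc (1 : ℝ) ≤ (c (n - 1) : ℝ) * γ ^ (n - 1 - (n - 1)) := hterm
        _ ≤ ∑ i ∈ Finset.range n, (c i : ℝ) * γ ^ (n - 1 - i) := by
          refine Finset.single_le_sum (f := fun i => (c i : ℝ) * γ ^ (n - 1 - i))
            (fun i _ => mul_nonneg (by exact_mod_cast (hcb i).1) (pow_nonneg hγ0.le _))
            (Finset.mem_range.2 (by omega))
    -- upper bounds
    have hgb : ∀ (M : ℕ) (d : ℕ → ℤ), (∀ i, 0 ≤ d i ∧ d i ≤ a) →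
        ∑ i ∈ Finset.range M, (d i : ℝ) * γ ^ (M - 1 - i) ≤ (a : ℝ) * (1 - γ)⁻¹ := by
      intro M d hd
      calc ∑ i ∈ Finset.range M, (d i : ℝ) * γ ^ (M - 1 - i)
          ≤ ∑ i ∈ Finset.range M, (a : ℝ) * γ ^ (M - 1 - i) :=
            Finset.sum_le_sum fun i _ =>
              mul_le_mul_of_nonneg_right (by exact_mod_cast (hd i).2) (pow_nonneg hγ0.le _)
        _ = (a : ℝ) * ∑ i ∈ Finset.range M, γ ^ (M - 1 - i) := by rw [Finset.mul_sum]
        _ = (a : ℝ) * ∑ i ∈ Finset.range M, γ ^ i := by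
            rw [Finset.sum_range_reflect (fun i => γ ^ i) M]
        _ ≤ (a : ℝ) * (1 - γ)⁻¹ := by
            apply mul_le_mul_of_nonneg_left (geom_bound hγ0.le hγ1 M) (by linarith)
    have hsx_nonneg : (0:ℝ) ≤ ∑ i ∈ Finset.range Nx, (dx i : ℝ) * γ ^ (Nx - 1 - i) :=
      Finset.sum_nonneg fun i _ =>
        mul_nonneg (by exact_mod_cast (hdxb i).1) (pow_nonneg hγ0.le _)
    have hsy_nonneg : (0:ℝ) ≤ ∑ i ∈ Finset.range Ny, (dy i : ℝ) * γ ^ (Ny - 1 - i) :=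
      Finset.sum_nonneg fun i _ =>
        mul_nonneg (by exact_mod_cast (hdyb i).1) (pow_nonneg hγ0.le _)
    have hsgn : ∀ e : ℤ, (e = 1 ∨ e = -1) → ∀ e' : ℤ, (e' = 1 ∨ e' = -1) →
        ((e * e' : ℤ) : ℝ) ≤ 1 := by
      rintro e (rfl | rfl) e' (rfl | rfl) <;> norm_num
    have hγpow_nonneg : (0:ℝ) ≤ γ ^ (n - N) := pow_nonneg hγ0.le _
    have hbx := hgb Nx dx hdxb
    have hby := hgb Ny dy hdyb
    have hγpowle : γ ^ (n - N) ≤ γ ^ L :=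
      pow_le_pow_of_le_one hγ0.le hγ1.le (by omega)
    have hD : (0:ℝ) < (1 - γ)⁻¹ := by
      apply inv_pos.2; linarith
    -- combine
    have hkey : (1 : ℝ) ≤ 2 * (a : ℝ) * γ ^ L * (1 - γ)⁻¹ := by
      have h1 : (1:ℝ) ≤
          ((ez * ex : ℤ) : ℝ) * (γ ^ (n - N) * ∑ i ∈ Finset.range Nx, (dx i : ℝ) * γ ^ (Nx - 1 - i))
          + ((ez * ey : ℤ) : ℝ) * (γ ^ (n - N) * ∑ i ∈ Finset.range Ny, (dy i : ℝ) * γ ^ (Ny - 1 - i)) := by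
        have := hQγ
        linarith [hsum_z]
      have h2 : ((ez * ex : ℤ) : ℝ) * (γ ^ (n - N) * ∑ i ∈ Finset.range Nx, (dx i : ℝ) * γ ^ (Nx - 1 - i))
          ≤ γ ^ (n - N) * ((a:ℝ) * (1 - γ)⁻¹) := by
        calc ((ez * ex : ℤ) : ℝ) * (γ ^ (n - N) * ∑ i ∈ Finset.range Nx, (dx i : ℝ) * γ ^ (Nx - 1 - i))
            ≤ 1 * (γ ^ (n - N) * ∑ i ∈ Finset.range Nx, (dx i : ℝ) * γ ^ (Nx - 1 - i)) := by
              apply mul_le_mul_of_nonneg_right (hsgn ez hez ex hexx)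
              exact mul_nonneg hγpow_nonneg hsx_nonneg
          _ = γ ^ (n - N) * ∑ i ∈ Finset.range Nx, (dx i : ℝ) * γ ^ (Nx - 1 - i) := by ring
          _ ≤ γ ^ (n - N) * ((a:ℝ) * (1 - γ)⁻¹) :=
              mul_le_mul_of_nonneg_left hbx hγpow_nonneg
      have h3 : ((ez * ey : ℤ) : ℝ) * (γ ^ (n - N) * ∑ i ∈ Finset.range Ny, (dy i : ℝ) * γ ^ (Ny - 1 - i))
          ≤ γ ^ (n - N) * ((a:ℝ) * (1 - γ)⁻¹) := by
        calc ((ez * ey : ℤ) : ℝ) * (γ ^ (n - N) * ∑ i ∈ Finset.range Ny, (dy i : ℝ) * γ ^ (Ny - 1 - i))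
            ≤ 1 * (γ ^ (n - N) * ∑ i ∈ Finset.range Ny, (dy i : ℝ) * γ ^ (Ny - 1 - i)) := by
              apply mul_le_mul_of_nonneg_right (hsgn ez hez ey heyy)
              exact mul_nonneg hγpow_nonneg hsy_nonneg
          _ = γ ^ (n - N) * ∑ i ∈ Finset.range Ny, (dy i : ℝ) * γ ^ (Ny - 1 - i) := by ring
          _ ≤ γ ^ (n - N) * ((a:ℝ) * (1 - γ)⁻¹) :=
              mul_le_mul_of_nonneg_left hby hγpow_nonneg
      have h4 : γ ^ (n - N) * ((a:ℝ) * (1 - γ)⁻¹) ≤ γ ^ L * ((a:ℝ) * (1 - γ)⁻¹) := by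
        apply mul_le_mul_of_nonneg_right hγpowle
        positivity
      calc (1:ℝ) ≤ _ + _ := h1
        _ ≤ γ ^ L * ((a:ℝ) * (1 - γ)⁻¹) + γ ^ L * ((a:ℝ) * (1 - γ)⁻¹) := by
            linarith [h2, h3, h4]
        _ = 2 * (a : ℝ) * γ ^ L * (1 - γ)⁻¹ := by ring
    -- contradiction with the choice of L
    have hLlt2 : 2 * (a:ℝ) * γ ^ L < 1 - γ := by
      have h5 := mul_lt_mul_of_pos_left hLlt (by linarith : (0:ℝ) < 2 * (a:ℝ))
      have h6 : 2 * (a:ℝ) * ((1 - γ) / (2 * (a:ℝ))) = 1 - γ := by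
        field_simp
      linarith
    have hfinal : 2 * (a:ℝ) * γ ^ L * (1 - γ)⁻¹ < (1 - γ) * (1 - γ)⁻¹ :=
      mul_lt_mul_of_pos_right hLlt2 hD
    rw [mul_inv_cancel₀ (by linarith : (1:ℝ) - γ ≠ 0)] at hfinal
    linarith

private lemma betaInt_mul {β : ℝ} (hβ : 1 < β) {t : ℝ} (ht : t ∈ betaInt β) :
    β * t ∈ betaInt β := by
  obtain ⟨N, hIco, hT⟩ := ht
  have hβ0 : (0 : ℝ) < β := by linarith
  have hdiv : |β * t| / β ^ (N + 1) = |t| / β ^ N := by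
    rw [abs_mul, abs_of_pos hβ0, pow_succ]
    field_simp
  refine ⟨N + 1, ?_, ?_⟩
  · rw [hdiv]; exact hIco
  · rw [hdiv, Function.iterate_succ_apply', hT, betaT_zero]

private lemma chainA {β : ℝ} (hβ2 : 2 < β) (z : ℝ) (k : ℕ)
    (hz2 : z * β ^ 2 = β ^ (2 * k + 2) + 1) :
    z ∈ finBeta β ∧ β * z ∉ betaInt β := by
  have hβ1 : 1 < β := by linarith
  have hβ0 : (0 : ℝ) < β := by linarith
  have hppos : ∀ m : ℕ, (0 : ℝ) < β ^ m := fun m => pow_pos hβ0 m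
  have hzpos : 0 < z := by nlinarith [hppos (2 * k + 2), hppos 2]
  have hw0 : 0 ≤ z / β ^ (2 * k + 1) := by positivity
  have hw1 : z / β ^ (2 * k + 1) < 1 := by
    rw [div_lt_one (hppos _)]
    have hgt : (1:ℝ) < β ^ (2 * k + 2) := one_lt_pow₀ hβ1 (by omega)
    have h3 : β ^ (2 * k + 3) = β ^ (2 * k + 1) * β ^ 2 := by ring
    have h4 : β ^ (2 * k + 3) = β ^ (2 * k + 2) * β := by ring
    nlinarith [hppos 2, hppos (2 * k + 2)]
  have hβw : β * (z / β ^ (2 * k + 1)) = 1 + 1 / β ^ (2 * k + 2) := by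
    field_simp
    linear_combination (β ^ (2 * k + 1)) * hz2
  have hfr0 : (0:ℝ) < 1 / β ^ (2 * k + 2) := by positivity
  have hfr1 : 1 / β ^ (2 * k + 2) < 1 := by
    rw [div_lt_one (hppos _)]
    exact one_lt_pow₀ hβ1 (by omega)
  have hT1 : betaT β (z / β ^ (2 * k + 1)) = 1 / β ^ (2 * k + 2) := by
    rw [betaT_eq β _ 1 (by rw [hβw]; push_cast; linarith) (by rw [hβw]; push_cast; linarith)]
    rw [hβw]
    push_cast
    ring
  have hT2 : (betaT β)^[2 * k + 2] (z / β ^ (2 * k + 1)) = 1 / β := by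
    have hsplit : (1:ℝ) / β ^ (2 * k + 2) = (1 / β) / β ^ (2 * k + 1) := by
      rw [div_div]
      congr 1
      ring
    have hb0 : (0:ℝ) ≤ 1 / β := by positivity
    have hb1 : (1:ℝ) / β < 1 := by rw [div_lt_one hβ0]; linarith
    rw [show 2 * k + 2 = (2 * k + 1) + 1 by omega, Function.iterate_succ_apply, hT1,
      hsplit, iter_scale β hβ1 hb0 hb1]
  have hT3 : (betaT β)^[2 * k + 3] (z / β ^ (2 * k + 1)) = 0 := by
    rw [show 2 * k + 3 = (2 * k + 2) + 1 by omega, Function.iterate_succ_apply', hT2]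
    have : (1:ℝ) / β = ((1 : ℤ) : ℝ) / β := by norm_num
    rw [this, betaT_intdiv β hβ0 1]
  constructor
  · refine ⟨2 * k + 1, 2 * k + 3, ?_, ?_⟩
    · rw [abs_of_pos hzpos]; exact ⟨hw0, hw1⟩
    · rw [abs_of_pos hzpos]; exact hT3
  · rintro ⟨N, hIco, hTN⟩
    have hupos : 0 < β * z := by positivity
    rw [abs_of_pos hupos] at hIco hTN
    rcases lt_or_ge N (2 * k + 2) with hN | hN
    · have hA : β * z / β ^ (2 * k + 1) = 1 + 1 / β ^ (2 * k + 2) := by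
        rw [← hβw]
        field_simp
      have hmono : β ^ N ≤ β ^ (2 * k + 1) := pow_le_pow_right₀ hβ1.le (by omega)
      have : β * z / β ^ (2 * k + 1) ≤ β * z / β ^ N := by
        apply div_le_div_of_nonneg_left hupos.le (hppos N) hmono
      rw [hA] at this
      have := hIco.2
      linarith
    · obtain ⟨j, rfl⟩ : ∃ j, N = (2 * k + 2) + j := ⟨N - (2 * k + 2), by omega⟩
      have hsplit : β * z / β ^ ((2 * k + 2) + j) = (z / β ^ (2 * k + 1)) / β ^ j := by
        rw [pow_add]
        field_simp
        ring
      rw [hsplit, Function.iterate_add_apply, iter_scale β hβ1 hw0 hw1 j, hT2] at hTN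
      have : (0:ℝ) < 1 / β := by positivity
      linarith [hTN]

private lemma mem_two_digit {β : ℝ} (hβ1 : 1 < β) (p q : ℤ) (hp : 0 ≤ p) (hq : 0 ≤ q)
    (hpq : (p : ℝ) * β + q < β ^ 2) (hqβ : (q : ℝ) < β) :
    (p : ℝ) * β + q ∈ betaInt β := by
  have hβ0 : (0 : ℝ) < β := by linarith
  have hpR : (0:ℝ) ≤ (p:ℝ) := by exact_mod_cast hp
  have hqR : (0:ℝ) ≤ (q:ℝ) := by exact_mod_cast hq
  have hvpos : 0 ≤ (p : ℝ) * β + q := by positivity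
  have habs : |(p : ℝ) * β + q| = (p : ℝ) * β + q := abs_of_nonneg hvpos
  have hfr0 : (0:ℝ) ≤ (q:ℝ) / β := by positivity
  have hfr1 : (q:ℝ) / β < 1 := by rw [div_lt_one hβ0]; exact hqβ
  have hmul : β * (((p : ℝ) * β + q) / β ^ 2) = (p:ℝ) + (q:ℝ) / β := by
    field_simp
  have hT1 : betaT β (((p : ℝ) * β + q) / β ^ 2) = (q:ℝ) / β := by
    rw [betaT_eq β _ p (by rw [hmul]; linarith) (by rw [hmul]; push_cast; linarith)]
    rw [hmul]
    ring
  refine ⟨2, ?_, ?_⟩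
  · rw [habs]
    constructor
    · positivity
    · rw [div_lt_one (by positivity)]; exact hpq
  · rw [habs, show (2:ℕ) = 1 + 1 by rfl, Function.iterate_succ_apply, hT1,
      Function.iterate_succ_apply, Function.iterate_zero_apply, betaT_intdiv β hβ0 q]

private lemma mem_y4 {a : ℤ} {β : ℝ} (ha : 4 ≤ a) (hβa : (a : ℝ) < β)
    (hroot2 : β ^ 3 - (a : ℝ) * β ^ 2 - 2 * β + 1 = 0) :
    (a : ℝ) * β ^ 3 + ((a : ℝ) - 1) * β + a ∈ betaInt β := by
  have haR : (4 : ℝ) ≤ (a : ℝ) := by exact_mod_cast ha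
  have hβ1 : 1 < β := by linarith
  have hβ0 : (0 : ℝ) < β := by linarith
  set v : ℝ := ((a : ℝ) - 1) * β + a with hv
  set y : ℝ := (a : ℝ) * β ^ 3 + v with hy
  have hvpos : 0 < v := by rw [hv]; nlinarith
  have hypos : 0 < y := by rw [hy]; positivity
  have hv2 : v < β ^ 2 := by rw [hv]; nlinarith
  have hv3 : v < β ^ 3 := by
    have : β ^ 2 < β ^ 3 := by nlinarith
    linarith
  have hy4 : y < β ^ 4 := by
    have hb4 : β ^ 4 = (a:ℝ) * β ^ 3 + 2 * β ^ 2 - β := by linear_combination β * hroot2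
    rw [hy, hb4, hv]
    nlinarith
  have habs : |y| = y := abs_of_pos hypos
  have hmul : β * (y / β ^ 4) = (a : ℝ) + v / β ^ 3 := by
    rw [hy]
    field_simp
  have hfrac3 : 0 ≤ v / β ^ 3 ∧ v / β ^ 3 < 1 := by
    constructor
    · positivity
    · rw [div_lt_one (by positivity)]; exact hv3
  have hT1 : betaT β (y / β ^ 4) = v / β ^ 3 := by
    rw [betaT_eq β _ a (by rw [hmul]; linarith [hfrac3.1]) (by rw [hmul]; push_cast; linarith [hfrac3.2])]
    rw [hmul]
    ring
  have hmul2 : β * (v / β ^ 3) = v / β ^ 2 := by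
    field_simp
  have hfrac2 : 0 ≤ v / β ^ 2 ∧ v / β ^ 2 < 1 := by
    constructor
    · positivity
    · rw [div_lt_one (by positivity)]; exact hv2
  have hT2 : betaT β (v / β ^ 3) = v / β ^ 2 := by
    rw [betaT_eq β _ 0 (by rw [hmul2]; push_cast; linarith [hfrac2.1]) (by rw [hmul2]; push_cast; linarith [hfrac2.2])]
    rw [hmul2]
    push_cast
    ring
  have hfr0 : (0:ℝ) ≤ (a:ℝ) / β := by positivity
  have hfr1 : (a:ℝ) / β < 1 := by rw [div_lt_one hβ0]; exact hβa
  have hmul3 : β * (v / β ^ 2) = ((a:ℝ) - 1) + (a:ℝ) / β := by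
    rw [hv]
    field_simp
  have hT3 : betaT β (v / β ^ 2) = (a:ℝ) / β := by
    rw [betaT_eq β _ (a - 1) (by rw [hmul3]; push_cast; linarith) (by rw [hmul3]; push_cast; linarith)]
    rw [hmul3]
    push_cast
    ring
  have hT4 : betaT β ((a:ℝ) / β) = 0 := betaT_intdiv β hβ0 a
  have heq : (a:ℝ) * β ^ 3 + ((a:ℝ) - 1) * β + (a:ℝ) = y := by rw [hy, hv]; ring
  refine ⟨4, ?_, ?_⟩
  · rw [heq, habs]
    constructor
    · positivity
    · rw [div_lt_one (by positivity)]; exact hy4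
  · rw [heq, habs, show (4:ℕ) = 1+1+1+1 by rfl]
    rw [Function.iterate_succ_apply, hT1, Function.iterate_succ_apply, hT2,
      Function.iterate_succ_apply, hT3, Function.iterate_succ_apply,
      Function.iterate_zero_apply, hT4]

theorem stmt6 (a b : ℤ) (hb : 0 < b) (hba : b < a) (β : ℝ) (hβ : 1 < β)
    (hroot : β ^ 3 - (a : ℝ) * β ^ 2 - (b : ℝ) * β + 1 = 0)
    (hcase : (2 ≤ a ∧ b = 1) ∨ (4 ≤ a ∧ b = 2)) :
    2 ≤ Lplus β ∧
    ∃ x ∈ betaInt β, ∃ y ∈ betaInt β,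
      x + y ∈ finBeta β ∧ β * (x + y) ∉ betaInt β := by
  have ha2 : 2 ≤ a := by rcases hcase with ⟨h, _⟩ | ⟨h, _⟩ <;> omega
  obtain ⟨hβa, hβa1⟩ := beta_bounds a b hb hba β hβ hroot
  obtain ⟨L, hL⟩ := exists_L a b hb hba ha2 β hβ hroot
  have haR : (2 : ℝ) ≤ (a : ℝ) := by exact_mod_cast ha2
  have hβ2 : (2 : ℝ) < β := by linarith
  have hβ0 : (0 : ℝ) < β := by linarith
  -- construct the counterexample in each case
  have hctr : ∃ x ∈ betaInt β, ∃ y ∈ betaInt β,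
      x + y ∈ finBeta β ∧ β * (x + y) ∉ betaInt β := by
    rcases hcase with ⟨ha, hb1⟩ | ⟨ha4, hb2⟩
    · -- b = 1
      subst hb1
      have hroot1 : β ^ 3 - (a : ℝ) * β ^ 2 - β + 1 = 0 := by
        push_cast at hroot
        linarith
      refine ⟨1, ?_, ((a : ℝ) - 1) * β + a, ?_, ?_⟩
      · refine ⟨1, ?_, ?_⟩
        · rw [abs_one, pow_one]
          exact ⟨by positivity, by rw [div_lt_one hβ0]; linarith⟩
        · rw [abs_one, pow_one, Function.iterate_one,
            show (1:ℝ)/β = ((1:ℤ):ℝ)/β by norm_num, betaT_intdiv β hβ0 1]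
      · have h := mem_two_digit hβ (a - 1) a (by omega) (by omega)
          (by push_cast; nlinarith) (by exact_mod_cast hβa)
        push_cast at h
        exact h
      · have hz2 : (1 + (((a : ℝ) - 1) * β + a)) * β ^ 2 = β ^ (2 * 1 + 2) + 1 := by
          norm_num
          linear_combination (-β - 1) * hroot1
        obtain ⟨h1, h2⟩ := chainA hβ2 _ 1 hz2
        exact ⟨h1, h2⟩
    · -- b = 2
      subst hb2
      have hroot2 : β ^ 3 - (a : ℝ) * β ^ 2 - 2 * β + 1 = 0 := by
        push_cast at hroot
        linarith
      have haR4 : (4 : ℝ) ≤ (a : ℝ) := by exact_mod_cast ha4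
      refine ⟨((a : ℝ) - 1) * β + 4, ?_, (a : ℝ) * β ^ 3 + ((a : ℝ) - 1) * β + a, ?_, ?_⟩
      · have h := mem_two_digit hβ (a - 1) 4 (by omega) (by omega)
          (by push_cast; nlinarith) (by push_cast; linarith)
        push_cast at h
        exact h
      · exact mem_y4 ha4 hβa hroot2
      · have hz2 : ((((a : ℝ) - 1) * β + 4) + ((a : ℝ) * β ^ 3 + ((a : ℝ) - 1) * β + a)) * β ^ 2
            = β ^ (2 * 2 + 2) + 1 := by
          norm_num
          linear_combination (-(β^3) - 2*β - 1) * hroot2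
        obtain ⟨h1, h2⟩ := chainA hβ2 _ 2 hz2
        exact ⟨h1, h2⟩
  obtain ⟨x, hx, y, hy, hfin, hnot⟩ := hctr
  refine ⟨?_, x, hx, y, hy, hfin, hnot⟩
  -- 2 ≤ Lplus β
  set S : Set ℕ := {L : ℕ | ∀ x ∈ betaInt β, ∀ y ∈ betaInt β,
    x + y ∈ finBeta β → β ^ L * (x + y) ∈ betaInt β} with hS
  have hSne : S.Nonempty := ⟨L, hL⟩
  have hmem := Nat.sInf_mem hSne
  have h0 : (0 : ℕ) ∉ S := by
    intro h
    have := h x hx y hy hfin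
    rw [pow_zero, one_mul] at this
    exact hnot (betaInt_mul hβ this)
  have h1 : (1 : ℕ) ∉ S := by
    intro h
    have := h x hx y hy hfin
    rw [pow_one] at this
    exact hnot this
  have hne0 : sInf S ≠ 0 := fun he => h0 (he ▸ hmem)
  have hne1 : sInf S ≠ 1 := fun he => h1 (he ▸ hmem)
  have : 2 ≤ sInf S := by omega
  exact this
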